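/- Let D ⊂ ℂ be a closed disk and let τ(D) = ρ(D)/dist(0, D), where dist(0,D) > 0. If a Möbius transformation F fixes 0 and maps the complement of D onto the open unit disk U, then |F(∞)| = τ(D)/(1 + τ(D)). -/

import Mathlib

open Metric Complex

set_option maxHeartbeats 2000000 in
/-- Let `D = closedBall ctr r` be a closed disk not containing `0`, and let
`F z = (a z + b)/(c z + d)` be a Möbius transformation with `F 0 = 0` mapping
the complement of the interior of `D` (together with `∞ ↦ a/c`) onto the closed
unit disk. Then `|F(∞)| = τ/(1 + τ)`, where `τ = ρ(D)/dist(0, D)`. -/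
theorem stmt16 (ctr : ℂ) (r : ℝ) (hr : 0 < r) (h0 : r < dist 0 ctr)
    (a b c d : ℂ) (hdet : a * d - b * c ≠ 0) (hd : d ≠ 0)
    (hF0 : (a * 0 + b) / (c * 0 + d) = 0)
    (himg : (fun z => (a * z + b) / (c * z + d)) ''
        {z : ℂ | z ∉ interior (closedBall ctr r)} =
      closedBall (0 : ℂ) 1 \ {a / c}) :
    ‖a / c‖ =
      (r / (dist 0 ctr - r)) / (1 + r / (dist 0 ctr - r)) := by
  -- b = 0
  have hb : b = 0 := by
    rw [mul_zero, mul_zero, zero_add, zero_add, div_eq_zero_iff] at hF0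
    exact hF0.resolve_right hd
  subst hb
  have ha : a ≠ 0 := by
    intro h
    exact hdet (by rw [h]; ring)
  have hdistM : dist (0:ℂ) ctr = ‖ctr‖ := by
    rw [Complex.dist_eq]; simp
  rw [hdistM] at h0 ⊢
  set M := ‖ctr‖ with hMdef
  have hM0 : (0:ℝ) < M := lt_trans hr h0
  have hint : interior (closedBall ctr r) = ball ctr r := interior_closedBall ctr hr.ne'
  -- forward: points outside the open disk map into the closed unit ball
  have hfwd : ∀ z : ℂ, r ≤ dist z ctr → ‖(a*z)/(c*z+d)‖ ≤ 1 := by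
    intro z hz
    have hzS : z ∈ {z : ℂ | z ∉ interior (closedBall ctr r)} := by
      simp only [Set.mem_setOf_eq, hint, mem_ball, not_lt]
      exact hz
    have hmem : (a*z+0)/(c*z+d) ∈ closedBall (0:ℂ) 1 \ {a/c} := by
      rw [← himg]; exact ⟨z, hzS, rfl⟩
    have h1 := hmem.1
    rw [mem_closedBall, Complex.dist_eq] at h1
    simpa using h1
  -- c ≠ 0
  have hc : c ≠ 0 := by
    intro hc0
    subst hc0
    have hq : 0 ≤ ‖d‖ / ‖a‖ :=
      div_nonneg (norm_nonneg d) (norm_nonneg a)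
    set R : ℝ := M + r + ‖d‖ / ‖a‖ + 1 with hR
    have hRpos : 0 < R := by rw [hR]; linarith
    have h1 := hfwd (ctr + (R:ℂ)) (by
      rw [Complex.dist_eq]
      simp only [add_sub_cancel_left]
      rw [Complex.norm_real, Real.norm_eq_abs, _root_.abs_of_pos hRpos, hR]
      linarith)
    rw [zero_mul, zero_add, norm_div, div_le_one (norm_pos_iff.mpr hd)] at h1
    rw [norm_mul] at h1
    have hzlb : R - M ≤ ‖ctr + (R:ℂ)‖ := by
      have h2 := norm_add_le (ctr + (R:ℂ)) (-ctr)
      rw [show ctr + (R:ℂ) + -ctr = (R:ℂ) by ring] at h2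
      rw [norm_neg, Complex.norm_real, Real.norm_eq_abs, _root_.abs_of_pos hRpos] at h2
      linarith
    have hapos : 0 < ‖a‖ := norm_pos_iff.mpr ha
    have h4 : ‖a‖ * (R - M) ≤ ‖d‖ :=
      le_trans (mul_le_mul_of_nonneg_left hzlb hapos.le) h1
    have hRM : R - M = r + ‖d‖ / ‖a‖ + 1 := by rw [hR]; ring
    have h13 : ‖a‖ * (R - M)
        = ‖a‖ * r + ‖d‖ + ‖a‖ := by
      rw [hRM, mul_add, mul_add, mul_div_cancel₀ _ hapos.ne', mul_one]
    rw [h13] at h4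
    nlinarith [mul_pos hapos hr]
  -- the pole lies strictly inside the disk
  have hpole : dist (-d/c) ctr < r := by
    by_contra hge
    push_neg at hge
    set p : ℂ := -d/c with hp
    have hcp : c * p = -d := by rw [hp]; field_simp
    have hp0 : p ≠ 0 := by
      rw [hp]; exact div_ne_zero (neg_ne_zero.mpr hd) hc
    have hap : (0:ℝ) < ‖a*p‖ := norm_pos_iff.mpr (mul_ne_zero ha hp0)
    have hacpos : (0:ℝ) < ‖a‖ + ‖c‖ := by
      have h5 := norm_pos_iff.mpr ha; have h6 := norm_nonneg c; linarith
    set t : ℝ := ‖a*p‖ / (2*(‖a‖ + ‖c‖)) with ht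
    have htpos : 0 < t := by rw [ht]; positivity
    have hpc : p - ctr ≠ 0 := by
      intro h
      have h7 : dist p ctr = 0 := by rw [Complex.dist_eq, h, norm_zero]
      rw [h7] at hge; linarith
    have habspc : 0 < ‖p - ctr‖ := norm_pos_iff.mpr hpc
    set u : ℂ := (p - ctr)/(‖p-ctr‖ : ℝ) with hu
    have hau : ‖u‖ = 1 := by
      rw [hu, norm_div, Complex.norm_real, Real.norm_eq_abs, _root_.abs_of_pos habspc, div_self habspc.ne']
    set z : ℂ := p + (t:ℂ)*u with hz
    have habszp : ‖z - p‖ = t := by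
      rw [show z - p = (t:ℂ)*u by rw [hz]; ring, norm_mul, Complex.norm_real, Real.norm_eq_abs,
        _root_.abs_of_pos htpos, hau, mul_one]
    have hdistz : dist z ctr = ‖p - ctr‖ + t := by
      rw [Complex.dist_eq]
      have hzc : z - ctr = (p - ctr) * (1 + (t:ℂ)/(‖p-ctr‖ : ℝ)) := by
        rw [hz, hu]
        have hne : ((‖p-ctr‖ : ℝ) : ℂ) ≠ 0 :=
          Complex.ofReal_ne_zero.mpr habspc.ne'
        field_simp
        ring
      rw [hzc, norm_mul]
      have h8 : (1 + (t:ℂ)/(‖p-ctr‖ : ℝ)) =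
          (((1 + t/(‖p-ctr‖)) : ℝ) : ℂ) := by push_cast; ring
      have h8' : 0 < 1 + t/(‖p-ctr‖) := by
        have := div_pos htpos habspc; linarith
      rw [h8, Complex.norm_real, Real.norm_eq_abs, _root_.abs_of_pos h8']
      field_simp
    have hzout : r ≤ dist z ctr := by
      rw [hdistz]
      rw [Complex.dist_eq] at hge
      linarith
    have hcz : c*z + d = c * (z - p) := by rw [mul_sub, hcp]; ring
    have habcz : ‖c*z + d‖ = ‖c‖ * t := by
      rw [hcz, norm_mul, habszp]
    have hczne : c*z + d ≠ 0 := by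
      intro h
      rw [h, norm_zero] at habcz
      have := norm_pos_iff.mpr hc
      nlinarith
    have h1 := hfwd z hzout
    rw [norm_div, div_le_one (by rw [habcz]; exact mul_pos (norm_pos_iff.mpr hc) htpos)] at h1
    have hlb : ‖a*p‖ - ‖a‖ * t ≤ ‖a*z‖ := by
      have h9 : a*p = a*z + (-(a*(z-p))) := by ring
      have h10 := norm_add_le (a*z) (-(a*(z-p)))
      rw [← h9, norm_neg] at h10
      rw [show ‖a*(z-p)‖ = ‖a‖ * t by
        rw [norm_mul, habszp]] at h10
      linarith
    rw [habcz] at h1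
    have hteq : (‖a‖ + ‖c‖) * t = ‖a*p‖ / 2 := by
      rw [ht]; field_simp
    nlinarith
  -- reverse: interior points (except the pole) map outside the open unit ball
  have hbwd : ∀ z : ℂ, dist z ctr < r → z ≠ -d/c →
      ‖c*z + d‖ ≤ ‖a*z‖ := by
    intro z hzin hzp
    by_contra hlt
    push_neg at hlt
    have hcz : c*z + d ≠ 0 := by
      intro h
      apply hzp
      field_simp
      linear_combination h
    set w : ℂ := a*z/(c*z+d) with hw
    have hw1 : ‖w‖ < 1 := by
      rw [hw, norm_div, div_lt_one (norm_pos_iff.mpr hcz)]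
      exact hlt
    have hwac : w ≠ a/c := by
      intro h
      rw [hw, div_eq_div_iff hcz hc] at h
      have h2 : a * d = 0 := by linear_combination -h
      exact (mul_ne_zero ha hd) h2
    have hmem : w ∈ closedBall (0:ℂ) 1 \ {a/c} := by
      constructor
      · rw [mem_closedBall, Complex.dist_eq]
        simpa using hw1.le
      · simpa using hwac
    rw [← himg] at hmem
    obtain ⟨z', hz'S, hfz'⟩ := hmem
    simp only [Set.mem_setOf_eq, hint, mem_ball, not_lt] at hz'S
    have hz'pole : z' ≠ -d/c := by
      intro h
      rw [h] at hz'S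
      linarith [hpole]
    have hcz' : c*z' + d ≠ 0 := by
      intro h
      apply hz'pole
      field_simp
      linear_combination h
    have heq : (a*z'+0)/(c*z'+d) = a*z/(c*z+d) := hfz'
    rw [add_zero, div_eq_div_iff hcz' hcz] at heq
    have hzz' : z' = z := by
      have h11 : a * d * z' = a * d * z := by linear_combination heq
      exact mul_left_cancel₀ (mul_ne_zero ha hd) h11
    rw [hzz'] at hz'S
    linarith
  -- key equality on the boundary circle
  have hkey : ∀ e : ℂ, ‖e‖ = 1 →
      ‖a*(ctr + (r:ℂ)*e)‖ = ‖c*(ctr + (r:ℂ)*e) + d‖ := by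
    intro e he
    have hdistz : ∀ s : ℝ, dist (ctr + (s:ℂ)*e) ctr = |s| := by
      intro s
      rw [Complex.dist_eq, add_sub_cancel_left, norm_mul, he, mul_one, Complex.norm_real, Real.norm_eq_abs]
    apply le_antisymm
    · -- from hfwd
      have hzr : r ≤ dist (ctr + (r:ℂ)*e) ctr := by
        rw [hdistz, _root_.abs_of_pos hr]
      have hzpole : ctr + (r:ℂ)*e ≠ -d/c := by
        intro h
        have h13 := hdistz r
        rw [h, _root_.abs_of_pos hr] at h13
        linarith [hpole]
      have hcz : c*(ctr + (r:ℂ)*e) + d ≠ 0 := by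
        intro h
        apply hzpole
        field_simp
        linear_combination h
      have h1 := hfwd _ hzr
      rw [norm_div, div_le_one (norm_pos_iff.mpr hcz)] at h1
      exact h1
    · -- limit from inside
      set pc := dist (-d/c) ctr with hpc
      have hpc0 : 0 ≤ pc := dist_nonneg
      have hev : ∀ s ∈ Set.Ioo pc r,
          ‖c*(ctr + (s:ℂ)*e) + d‖ ≤ ‖a*(ctr + (s:ℂ)*e)‖ := by
        intro s hs
        apply hbwd
        · rw [hdistz, _root_.abs_of_nonneg (le_trans hpc0 hs.1.le)]
          exact hs.2
        · intro h
          have h12 := hdistz s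
          rw [h, _root_.abs_of_nonneg (le_trans hpc0 hs.1.le)] at h12
          rw [← hpc] at h12
          exact absurd h12 (ne_of_lt hs.1)
      have hcontz : Continuous fun s : ℝ => ctr + (s:ℂ)*e :=
        continuous_const.add (Complex.continuous_ofReal.mul continuous_const)
      have hcont1 : Filter.Tendsto (fun s : ℝ => ‖c*(ctr + (s:ℂ)*e) + d‖)
          (nhdsWithin r (Set.Iio r)) (nhds (‖c*(ctr + (r:ℂ)*e) + d‖)) := by
        apply Filter.Tendsto.mono_left _ nhdsWithin_le_nhds
        exact (continuous_norm.comp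
          ((continuous_const.mul hcontz).add continuous_const)).tendsto r
      have hcont2 : Filter.Tendsto (fun s : ℝ => ‖a*(ctr + (s:ℂ)*e)‖)
          (nhdsWithin r (Set.Iio r)) (nhds (‖a*(ctr + (r:ℂ)*e)‖)) := by
        apply Filter.Tendsto.mono_left _ nhdsWithin_le_nhds
        exact (continuous_norm.comp (continuous_const.mul hcontz)).tendsto r
      apply le_of_tendsto_of_tendsto hcont1 hcont2
      filter_upwards [Ioo_mem_nhdsLT_of_mem (⟨hpole, le_refl r⟩ : r ∈ Set.Ioc pc r)] with s hs
      exact hev s hs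
  -- the four boundary equations, as normSq equations
  have hnsq : ∀ e : ℂ, ‖e‖ = 1 →
      Complex.normSq (a*(ctr + (r:ℂ)*e)) = Complex.normSq (c*(ctr + (r:ℂ)*e) + d) := by
    intro e he
    rw [← Complex.sq_norm, ← Complex.sq_norm, hkey e he]
  have e1 := hnsq 1 (by simp)
  have e2 := hnsq Complex.I (by simp)
  have e3 := hnsq (-1) (by simp)
  have e4 := hnsq (-Complex.I) (by simp)
  simp only [Complex.normSq_apply, Complex.add_re, Complex.add_im, Complex.mul_re,
    Complex.mul_im, Complex.ofReal_re, Complex.ofReal_im, Complex.I_re, Complex.I_im,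
    Complex.one_re, Complex.one_im, Complex.neg_re, Complex.neg_im] at e1 e2 e3 e4
  have hD2pos : 0 < d.re^2 + d.im^2 := by
    have h14 : 0 < Complex.normSq d := Complex.normSq_pos.mpr hd
    rw [Complex.normSq_apply] at h14
    rw [pow_two, pow_two]
    exact h14
  -- Re K = t * xr
  have h5 : c.re*d.re + c.im*d.im
      = (a.re^2 + a.im^2 - (c.re^2 + c.im^2)) * ctr.re := by
    have hh : (4*r) * (c.re*d.re + c.im*d.im)
        = (4*r) * ((a.re^2 + a.im^2 - (c.re^2 + c.im^2)) * ctr.re) := by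
      linear_combination e3 - e1
    exact mul_left_cancel₀ (by positivity) hh
  -- Im K = -(t * xi)
  have h6 : c.im*d.re - c.re*d.im
      = -((a.re^2 + a.im^2 - (c.re^2 + c.im^2)) * ctr.im) := by
    have hh : (4*r) * (c.im*d.re - c.re*d.im)
        = (4*r) * (-((a.re^2 + a.im^2 - (c.re^2 + c.im^2)) * ctr.im)) := by
      linear_combination e2 - e4
    exact mul_left_cancel₀ (by positivity) hh
  -- |d|^2 = t (r^2 - M^2)
  have h7 : d.re^2 + d.im^2
      = (a.re^2 + a.im^2 - (c.re^2 + c.im^2)) * (r^2 - (ctr.re^2 + ctr.im^2)) := by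
    linear_combination (-e1 - e3)/2 - 2*ctr.re*h5 + 2*ctr.im*h6
  have ht0 : (a.re^2 + a.im^2 - (c.re^2 + c.im^2)) ≠ 0 := by
    intro h
    rw [h, zero_mul] at h7
    exact hD2pos.ne' h7
  have h10 : (a.re^2 + a.im^2 - (c.re^2 + c.im^2)) * ((a.re^2 + a.im^2) * (ctr.re^2 + ctr.im^2))
      = (a.re^2 + a.im^2 - (c.re^2 + c.im^2)) * ((c.re^2 + c.im^2) * r^2) := by
    linear_combination
      (-(c.re*d.re + c.im*d.im + (a.re^2 + a.im^2 - (c.re^2 + c.im^2)) * ctr.re))*h5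
      - (c.im*d.re - c.re*d.im - (a.re^2 + a.im^2 - (c.re^2 + c.im^2)) * ctr.im)*h6
      + (c.re^2 + c.im^2)*h7
  have hkey2 : (a.re^2 + a.im^2) * (ctr.re^2 + ctr.im^2) = (c.re^2 + c.im^2) * r^2 :=
    mul_left_cancel₀ ht0 h10
  clear himg hfwd hbwd hkey hnsq e1 e2 e3 e4 h5 h6 h7 h10 ht0 hD2pos hdet hF0
  -- turn into |a| * M = |c| * r
  have hsq : (‖a‖ * M)^2 = (‖c‖ * r)^2 := by
    rw [hMdef, mul_pow, mul_pow, Complex.sq_norm, Complex.sq_norm, Complex.sq_norm,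
      Complex.normSq_apply, Complex.normSq_apply, Complex.normSq_apply]
    linear_combination hkey2
  have habs : ‖a‖ * M = ‖c‖ * r := by
    have h11 : 0 ≤ ‖a‖ * M := by positivity
    have h12 : 0 ≤ ‖c‖ * r := by positivity
    nlinarith [sq_nonneg (‖a‖ * M - ‖c‖ * r),
      sq_nonneg (‖a‖ * M + ‖c‖ * r)]
  -- finish
  rw [norm_div]
  have hcpos : 0 < ‖c‖ := norm_pos_iff.mpr hc
  have hMr : 0 < M - r := by linarith
  have hd1 : M - r ≠ 0 := hMr.ne'
  have hd2 : ‖c‖ ≠ 0 := hcpos.ne'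
  field_simp
  nlinarith [habs, mul_pos hcpos hM0]
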